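/- Every character value χ(a) and χ(b), for χ an irreducible complex character of G, lies in the field generated over ℚ by the eigenvalues of x acting by left multiplication on ℂ[G×G]. -/

import Mathlib

open Module CategoryTheory

noncomputable def parkerX {G : Type*} [Group G] [Fintype G] (a b : G) :
    MonoidAlgebra ℂ (G × G) :=
  ∑ g : G, MonoidAlgebra.single (g⁻¹ * a * g, g⁻¹ * b * g) (1 : ℂ)

lemma schur_conj_sum {G : Type} [Group G] [Fintype G] (t : G) (V : FDRep ℂ G)
    (hV : CategoryTheory.Simple V) :
    ∃ c : ℂ, ∀ u : G, ∑ g : G, V.character (u * (g⁻¹ * t * g)) = c * V.character u := by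
  classical
  haveI := hV
  set T : Module.End ℂ V := ∑ g : G, V.ρ (g⁻¹ * t * g) with hT
  have hcomm : ∀ g : G, T * V.ρ g = V.ρ g * T := by
    intro g
    rw [hT, Finset.sum_mul, Finset.mul_sum]
    apply Fintype.sum_equiv (Equiv.mulRight g)
    intro k
    show V.ρ (k⁻¹ * t * k) * V.ρ g = V.ρ g * V.ρ ((k * g)⁻¹ * t * (k * g))
    rw [← map_mul, ← map_mul]
    congr 1
    group
  let Th : V ⟶ V := ⟨InducedCategory.homMk (ModuleCat.ofHom T), fun g => by
    ext v
    exact LinearMap.congr_fun (hcomm g) v⟩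
  obtain ⟨c, hc⟩ := CategoryTheory.endomorphism_simple_eq_smul_id ℂ Th
  refine ⟨c, fun u => ?_⟩
  have hThom : T = c • (1 : Module.End ℂ V) := by
    have h2 := congrArg Action.Hom.hom hc
    rw [Action.smul_hom] at h2
    exact (congrArg (fun f => f.hom.hom) h2).symm
  calc ∑ g : G, V.character (u * (g⁻¹ * t * g))
      = ∑ g : G, LinearMap.trace ℂ V (V.ρ u * V.ρ (g⁻¹ * t * g)) := by
        simp [FDRep.character, map_mul]
    _ = LinearMap.trace ℂ V (V.ρ u * T) := by
        rw [hT, Finset.mul_sum, map_sum]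
    _ = c * V.character u := by
        rw [hThom]
        simp only [mul_smul_comm, mul_one, map_smul, smul_eq_mul]
        rfl

lemma parker_key {G : Type} [Group G] [Fintype G] (a b : G) (V : FDRep ℂ G)
    (hV : CategoryTheory.Simple V) (π : G × G →* G) (t : G)
    (hπ : ∀ g : G, π (g⁻¹ * a * g, g⁻¹ * b * g) = g⁻¹ * t * g) :
    V.character t ∈ IntermediateField.adjoin ℚ
        {μ : ℂ | Module.End.HasEigenvalue (LinearMap.mulLeft ℂ (parkerX a b)) μ} := by
  classical
  obtain ⟨c, hc⟩ := schur_conj_sum t V hV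
  set n : ℕ := finrank ℂ V with hn
  have hchar1 : V.character 1 = n := FDRep.char_one V
  have hkey : (Fintype.card G : ℂ) * V.character t = c * n := by
    have h1 := hc 1
    simp only [one_mul] at h1
    have h2 : ∀ g : G, V.character (g⁻¹ * t * g) = V.character t := by
      intro g
      have := FDRep.char_conj V t g⁻¹
      simpa using this
    rw [Finset.sum_congr rfl (fun g _ => h2 g), Finset.sum_const, Finset.card_univ,
      nsmul_eq_mul, hchar1] at h1
    exact_mod_cast h1
  have hnpos : 0 < n := by
    by_contra h
    have h0 : n = 0 := by omega
    rw [hn] at h0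
    have : Subsingleton V := Module.finrank_zero_iff.mp h0
    have hid : (𝟙 V : V ⟶ V) = 0 := by
      apply Action.Hom.ext
      apply FGModuleCat.hom_ext
      apply LinearMap.ext
      intro v
      exact this.allEq _ _
    exact CategoryTheory.id_nonzero V hid
  -- the eigenvector
  set y : MonoidAlgebra ℂ (G × G) :=
    ∑ p : G × G, MonoidAlgebra.single p (V.character (π p)⁻¹) with hy
  have hy0 : y ≠ 0 := by
    intro h
    have : y.coeff 1 = 0 := by rw [h]; rfl
    rw [hy] at this
    rw [MonoidAlgebra.coeff_sum, Finset.sum_apply'] at this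
    simp only [MonoidAlgebra.coeff_single, Finsupp.single_apply] at this
    rw [Finset.sum_ite_eq' Finset.univ (1 : G × G)] at this
    simp only [Finset.mem_univ, if_true, map_one, inv_one, hchar1] at this
    exact_mod_cast hnpos.ne' (by exact_mod_cast this)
  have hxy : parkerX a b * y = c • y := by
    rw [parkerX, Finset.sum_mul]
    have step1 : ∀ g : G,
        (MonoidAlgebra.single ((g⁻¹ * a * g, g⁻¹ * b * g) : G × G) (1 : ℂ)) * y
          = ∑ q : G × G, MonoidAlgebra.single q
              (V.character ((π q)⁻¹ * (g⁻¹ * t * g))) := by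
      intro g
      rw [hy, Finset.mul_sum]
      have : ∀ p : G × G,
          MonoidAlgebra.single ((g⁻¹ * a * g, g⁻¹ * b * g) : G × G) (1 : ℂ) *
            MonoidAlgebra.single p (V.character (π p)⁻¹)
          = MonoidAlgebra.single ((g⁻¹ * a * g, g⁻¹ * b * g) * p)
              (V.character (π p)⁻¹) := by
        intro p
        rw [MonoidAlgebra.single_mul_single, one_mul]
      rw [Finset.sum_congr rfl (fun p _ => this p)]
      apply Fintype.sum_equiv (Equiv.mulLeft ((g⁻¹ * a * g, g⁻¹ * b * g) : G × G))
      intro p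
      show MonoidAlgebra.single ((g⁻¹ * a * g, g⁻¹ * b * g) * p) (V.character (π p)⁻¹)
        = MonoidAlgebra.single ((g⁻¹ * a * g, g⁻¹ * b * g) * p)
            (V.character ((π ((g⁻¹ * a * g, g⁻¹ * b * g) * p))⁻¹ * (g⁻¹ * t * g)))
      congr 1
      rw [map_mul, mul_inv_rev, hπ]
      congr 1
      group
    rw [Finset.sum_congr rfl (fun g _ => step1 g), Finset.sum_comm]
    rw [hy, Finset.smul_sum]
    apply Finset.sum_congr rfl
    intro q _
    rw [show (∑ x : G, MonoidAlgebra.single q (V.character ((π q)⁻¹ * (x⁻¹ * t * x))))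
        = MonoidAlgebra.single q (∑ x : G, V.character ((π q)⁻¹ * (x⁻¹ * t * x))) from
        (map_sum (MonoidAlgebra.singleAddHom q) _ _).symm]
    rw [MonoidAlgebra.smul_single]
    congr 1
    rw [hc ((π q)⁻¹), smul_eq_mul]
  have hev : Module.End.HasEigenvalue (LinearMap.mulLeft ℂ (parkerX a b)) c := by
    apply Module.End.hasEigenvalue_of_hasEigenvector (x := y)
    refine ⟨?_, hy0⟩
    rw [Module.End.mem_eigenspace_iff, LinearMap.mulLeft_apply]
    exact hxy
  have hcm : c ∈ IntermediateField.adjoin ℚ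
      {μ : ℂ | Module.End.HasEigenvalue (LinearMap.mulLeft ℂ (parkerX a b)) μ} :=
    IntermediateField.subset_adjoin ℚ _ hev
  have hGne : (Fintype.card G : ℂ) ≠ 0 := by
    exact_mod_cast Fintype.card_ne_zero
  have hformula : V.character t = (n : ℂ) * c / (Fintype.card G : ℂ) := by
    field_simp
    rw [mul_comm] at hkey
    rw [hkey]; ring
  rw [hformula]
  exact div_mem (mul_mem (natCast_mem _ n) hcm) (natCast_mem _ _)

/-- every character value `χ(a)`, `χ(b)`, for `χ` an irreducible complex
character of `G`, lies in the field generated over `ℚ` by the eigenvalues of `x` acting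
by left multiplication on `ℂ[G×G]`. -/
theorem parker_stmt7 {G : Type} [Group G] [Fintype G] (a b : G)
    (V : FDRep ℂ G) (hV : CategoryTheory.Simple V) :
    V.character a ∈ IntermediateField.adjoin ℚ
        {μ : ℂ | Module.End.HasEigenvalue (LinearMap.mulLeft ℂ (parkerX a b)) μ} ∧
    V.character b ∈ IntermediateField.adjoin ℚ
        {μ : ℂ | Module.End.HasEigenvalue (LinearMap.mulLeft ℂ (parkerX a b)) μ} := by
  constructor
  · exact parker_key a b V hV (MonoidHom.fst G G) a (fun g => rfl)
  · exact parker_key a b V hV (MonoidHom.snd G G) b (fun g => rfl)
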